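/- Let (V,q) be a 4-dimensional nondegenerate quadratic space over a field F of characteristic different from 2, and τ an isometry. Then τ is an interchange isometry (K(τ) is 2-dimensional and totally isotropic) if and only if (τ - id)² = 0 and τ ≠ id. -/

import Mathlib

theorem wall_stmt12 {F V : Type*} [Field F] [AddCommGroup V] [Module F V]
    [FiniteDimensional F V] (hchar : (2 : F) ≠ 0) (q : QuadraticForm F V)
    (hq : LinearMap.BilinForm.Nondegenerate (QuadraticMap.polarBilin q))
    (hV : Module.finrank F V = 4)
    (τ : V →ₗ[F] V) (hτ : ∀ x, q (τ x) = q x) :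
    (Module.finrank F (LinearMap.ker (τ - LinearMap.id)) = 2 ∧
        ∀ x ∈ LinearMap.ker (τ - LinearMap.id), q x = 0) ↔
      ((τ - LinearMap.id) ∘ₗ (τ - LinearMap.id) = 0 ∧ τ ≠ LinearMap.id) := by
  set B := QuadraticMap.polarBilin q with hB
  set σ : V →ₗ[F] V := τ - LinearMap.id with hσ
  have hσapp : ∀ x, σ x = τ x - x := fun x => rfl
  have hBapp : ∀ x y, B x y = q (x + y) - q x - q y := fun x y => rfl
  have hrefl : B.IsRefl := fun x y h => by
    rw [hBapp] at h ⊢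
    rw [add_comm]
    linear_combination h
  -- membership in kernel
  have hKτ : ∀ y, σ y = 0 → τ y = y := by
    intro y hy
    have := hσapp y
    rw [hy] at this
    linear_combination (norm := module) -this
  -- invariance of B
  have hBinv : ∀ x y, B (τ x) (τ y) = B x y := by
    intro x y
    rw [hBapp, hBapp, ← map_add, hτ, hτ, hτ]
  -- key relation
  have hrel : ∀ x y, B (σ x) (τ y) = - B x (σ y) := by
    intro x y
    have h1 : B (τ x - x) (τ y) = B (τ x) (τ y) - B x (τ y) := by
      rw [map_sub, LinearMap.sub_apply]
    have h2 : B x (τ y - y) = B x (τ y) - B x y := map_sub _ _ _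
    rw [hσapp, hσapp, h1, h2, hBinv]
    ring
  -- B (σ x) y = 0 for y in kernel
  have horth : ∀ x y, σ y = 0 → B (σ x) y = 0 := by
    intro x y hy
    have := hrel x y
    rw [hKτ y hy, hy, map_zero, neg_zero] at this
    exact this
  -- q (σ x) = - B (σ x) x
  have hself : ∀ x, B (σ x) x = - q (σ x) := by
    intro x
    rw [hBapp]
    have : σ x + x = τ x := by rw [hσapp]; abel
    rw [this, hτ]
    ring
  -- totally isotropic range when sigma^2 = 0
  have hq0 : (∀ x, σ (σ x) = 0) → ∀ x, q (σ x) = 0 := by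
    intro hσσ x
    have h1 : B (σ x) (τ (σ x)) = - B x (σ (σ x)) := hrel x (σ x)
    rw [hσσ x, map_zero, neg_zero, hKτ (σ x) (hσσ x)] at h1
    have h2 : B (σ x) (σ x) = 2 • q (σ x) := QuadraticMap.polar_self q (σ x)
    rw [h1, two_smul] at h2
    have h4 : (2 : F) * q (σ x) = 0 := by linear_combination -h2
    rcases mul_eq_zero.mp h4 with h | h
    · exact absurd h hchar
    · exact h
  constructor
  · rintro ⟨hdim, hiso⟩
    constructor
    · -- sigma^2 = 0
      set K := LinearMap.ker σ with hK
      have hKle : K ≤ LinearMap.BilinForm.orthogonal B K := by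
        intro x hx
        rw [LinearMap.BilinForm.mem_orthogonal_iff]
        intro y hy
        have hxy : y + x ∈ K := add_mem hy hx
        show B y x = 0
        rw [hBapp, hiso _ hxy, hiso _ hx, hiso _ hy]
        ring
      have hdimO : Module.finrank F (LinearMap.BilinForm.orthogonal B K) = 2 := by
        rw [LinearMap.BilinForm.finrank_orthogonal hq, hV, hdim]
      have hKeq : K = LinearMap.BilinForm.orthogonal B K :=
        Submodule.eq_of_le_of_finrank_le hKle (by rw [hdimO, hdim])
      have hrange : ∀ x, σ x ∈ K := by
        intro x
        rw [hKeq, LinearMap.BilinForm.mem_orthogonal_iff]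
        intro y hy
        exact hrefl _ _ (horth x y hy)
      ext x
      simpa using LinearMap.mem_ker.mp (hrange x)
    · -- tau ≠ id
      intro h
      have hσ0 : σ = 0 := by rw [hσ, h, sub_self]
      have : Module.finrank F (LinearMap.ker σ) = 4 := by
        rw [hσ0, LinearMap.ker_zero, finrank_top, hV]
      rw [hdim] at this
      exact absurd this (by norm_num)
  · rintro ⟨hcomp, hne⟩
    have hσσ : ∀ x, σ (σ x) = 0 := fun x => LinearMap.ext_iff.mp hcomp x
    have hq0' : ∀ x, q (σ x) = 0 := hq0 hσσ
    have hBσ : ∀ x, B (σ x) x = 0 := by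
      intro x
      rw [hself, hq0', neg_zero]
    obtain ⟨x0, hx0⟩ : ∃ x, σ x ≠ 0 := by
      by_contra h
      push_neg at h
      exact hne (by
        apply LinearMap.ext
        intro x
        have := h x
        rw [hσapp] at this
        rw [LinearMap.id_apply]
        linear_combination (norm := module) this)
    have hx0K : x0 ∉ LinearMap.ker σ := fun h => hx0 h
    have hrange : LinearMap.range σ ≤ LinearMap.ker σ := by
      rintro _ ⟨x, rfl⟩
      exact hσσ x
    have hrn : Module.finrank F (LinearMap.range σ) +
        Module.finrank F (LinearMap.ker σ) = 4 := by
      rw [LinearMap.finrank_range_add_finrank_ker, hV]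
    have hle : Module.finrank F (LinearMap.range σ) ≤
        Module.finrank F (LinearMap.ker σ) :=
      Submodule.finrank_mono hrange
    have hker_ne4 : Module.finrank F (LinearMap.ker σ) ≠ 4 := by
      intro h
      have : LinearMap.ker σ = ⊤ := Submodule.eq_top_of_finrank_eq (by rw [h, hV])
      exact hx0K (this ▸ Submodule.mem_top)
    have hker_le : Module.finrank F (LinearMap.ker σ) ≤ 4 := by
      rw [← hV]; exact Submodule.finrank_le _
    have hker_ne3 : Module.finrank F (LinearMap.ker σ) ≠ 3 := by
      intro h3
      set K := LinearMap.ker σ with hK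
      set W := K ⊔ Submodule.span F {x0} with hW
      have hx0W : x0 ∈ W := Submodule.mem_sup_right (Submodule.mem_span_singleton_self x0)
      have hKlt : K < W := lt_of_le_of_ne le_sup_left (fun h => hx0K (h ▸ hx0W))
      have hWfin : Module.finrank F W = 4 := by
        have h1 : Module.finrank F K < Module.finrank F W :=
          Submodule.finrank_lt_finrank_of_lt hKlt
        have h2 : Module.finrank F W ≤ 4 := by rw [← hV]; exact Submodule.finrank_le _
        omega
      have hWtop : W = ⊤ := Submodule.eq_top_of_finrank_eq (by rw [hWfin, hV])
      apply hx0
      apply hq.1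
      intro n
      have hn : n ∈ W := hWtop ▸ Submodule.mem_top
      obtain ⟨k, hk, z, hz, rfl⟩ := Submodule.mem_sup.mp hn
      obtain ⟨c, rfl⟩ := Submodule.mem_span_singleton.mp hz
      rw [map_add, map_smul, horth x0 k hk, hBσ, smul_zero, add_zero]
    have hker2 : Module.finrank F (LinearMap.ker σ) = 2 := by omega
    refine ⟨hker2, ?_⟩
    have heq : LinearMap.range σ = LinearMap.ker σ :=
      Submodule.eq_of_le_of_finrank_le hrange (by omega)
    intro x hx
    rw [← heq] at hx
    obtain ⟨y, rfl⟩ := hx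
    exact hq0' y
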